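/- For n ≥ 1, P_n(x) = (x + 1)/(2^n n! n) · d^{n+1}/dx^{n+1}[(x² - 1)^n] (a Rodrigues-type formula for polar Legendre polynomials). -/

import Mathlib

open intervalIntegral Finset Polynomial

/-- The `n`-th Legendre polynomial (as a function), via the Rodrigues formula,
normalized so that `legendreP n 1 = 1`. -/
noncomputable def legendreP (n : ℕ) : ℝ → ℝ :=
  fun x => (1 / (2 ^ n * (n.factorial : ℝ))) * iteratedDeriv n (fun y => (y ^ 2 - 1) ^ n) x

/-- `Qpoly n x = -∫_x^1 L_{n-1}(t) dt`. -/
noncomputable def Qpoly (n : ℕ) : ℝ → ℝ :=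
  fun x => -∫ t in x..(1 : ℝ), legendreP (n - 1) t

lemma iteratedDeriv_polyeval (p : ℝ[X]) (k : ℕ) :
    iteratedDeriv k (fun y : ℝ => p.eval y) = fun y => (derivative^[k] p).eval y := by
  induction k with
  | zero => simp
  | succ k ih =>
    rw [iteratedDeriv_succ, ih, Function.iterate_succ_apply']
    funext y
    exact Polynomial.deriv (𝕜 := ℝ) (p := derivative^[k] p)

lemma base_id (n : ℕ) (hn : 1 ≤ n) :
    (X ^ 2 - 1 : ℝ[X]) * derivative ((X ^ 2 - 1) ^ n)
      = 2 * (n : ℝ[X]) * X * (X ^ 2 - 1) ^ n := by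
  have h : (X ^ 2 - 1 : ℝ[X]) * (X ^ 2 - 1) ^ (n - 1) = (X ^ 2 - 1) ^ n := by
    rw [← pow_succ']; congr 1; omega
  rw [derivative_pow, C_eq_natCast]
  have hd : derivative (X ^ 2 - 1 : ℝ[X]) = 2 * X := by
    simp [derivative_X_pow]
    norm_num
  rw [hd]
  calc (X ^ 2 - 1 : ℝ[X]) * ((n : ℝ[X]) * (X ^ 2 - 1) ^ (n - 1) * (2 * X))
      = (n : ℝ[X]) * (2 * X) * ((X ^ 2 - 1) * (X ^ 2 - 1) ^ (n - 1)) := by ring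
    _ = 2 * (n : ℝ[X]) * X * (X ^ 2 - 1) ^ n := by rw [h]; ring

lemma rec_id (n k : ℕ) (hk : k + 1 ≤ n) :
    (X ^ 2 - 1 : ℝ[X]) * derivative^[k + 2] ((X ^ 2 - 1) ^ n)
      = 2 * ((n : ℝ[X]) - (k : ℝ[X]) - 1) * X * derivative^[k + 1] ((X ^ 2 - 1) ^ n)
        + ((k : ℝ[X]) + 1) * (2 * (n : ℝ[X]) - (k : ℝ[X])) * derivative^[k] ((X ^ 2 - 1) ^ n) := by
  induction k with
  | zero =>
    have h := congrArg derivative (base_id n (by omega))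
    simp only [derivative_mul, derivative_sub, derivative_one, derivative_X_pow, derivative_X,
      derivative_natCast, derivative_ofNat, derivative_add, C_eq_natCast, ← Function.iterate_succ_apply'] at h ⊢
    push_cast
    simp only [Function.iterate_one, Function.iterate_succ_apply, Function.iterate_zero_apply] at h ⊢
    linear_combination h
  | succ k ih =>
    have h := congrArg derivative (ih (by omega))
    simp only [derivative_mul, derivative_sub, derivative_one, derivative_X_pow, derivative_X,
      derivative_natCast, derivative_ofNat, derivative_add, C_eq_natCast, ← Function.iterate_succ_apply'] at h ⊢
    push_cast at h ⊢
    linear_combination h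

lemma key_id (n : ℕ) (hn : 1 ≤ n) :
    (X ^ 2 - 1 : ℝ[X]) * derivative^[n + 1] ((X ^ 2 - 1) ^ n)
      = (n : ℝ[X]) * ((n : ℝ[X]) + 1) * derivative^[n - 1] ((X ^ 2 - 1) ^ n) := by
  have h := rec_id n (n - 1) (by omega)
  have e1 : n - 1 + 2 = n + 1 := by omega
  have e2 : n - 1 + 1 = n := by omega
  rw [e1, e2] at h
  have e3 : ((n - 1 : ℕ) : ℝ[X]) = (n : ℝ[X]) - 1 := by
    push_cast [Nat.cast_sub hn]; ring
  rw [e3] at h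
  rw [h]; ring

lemma eval_one_zero (n : ℕ) (hn : 1 ≤ n) :
    (derivative^[n - 1] ((X ^ 2 - 1 : ℝ[X]) ^ n)).eval 1 = 0 := by
  have hdvd : (X - 1 : ℝ[X]) ^ n ∣ (X ^ 2 - 1) ^ n := by
    apply pow_dvd_pow_of_dvd
    exact ⟨X + 1, by ring⟩
  have h := Polynomial.pow_sub_dvd_iterate_derivative_of_pow_dvd (n - 1) hdvd
  obtain ⟨r, hr⟩ := h
  rw [hr]
  have : n - (n - 1) = 1 := by omega
  rw [this]
  simp

set_option maxHeartbeats 1000000 in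
lemma integral_eval (n : ℕ) (hn : 1 ≤ n) (x : ℝ) :
    ∫ t in x..(1 : ℝ), (derivative^[n] ((X ^ 2 - 1 : ℝ[X]) ^ n)).eval t
      = - (derivative^[n - 1] ((X ^ 2 - 1 : ℝ[X]) ^ n)).eval x := by
  have e2 : n - 1 + 1 = n := by omega
  have hder : ∀ t ∈ Set.uIcc x (1 : ℝ),
      HasDerivAt (fun y => (derivative^[n - 1] ((X ^ 2 - 1 : ℝ[X]) ^ n)).eval y)
        ((derivative^[n] ((X ^ 2 - 1 : ℝ[X]) ^ n)).eval t) t := by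
    intro t _
    have e : derivative^[n] ((X ^ 2 - 1 : ℝ[X]) ^ n)
        = derivative (derivative^[n - 1] ((X ^ 2 - 1 : ℝ[X]) ^ n)) := by
      rw [← Function.iterate_succ_apply' (derivative : ℝ[X] → ℝ[X]) (n - 1)
        ((X ^ 2 - 1 : ℝ[X]) ^ n)]
      congr 1
      omega
    rw [e]
    exact Polynomial.hasDerivAt _ t
  have hint := intervalIntegral.integral_eq_sub_of_hasDerivAt hder
    ((Polynomial.continuous (derivative^[n] ((X ^ 2 - 1 : ℝ[X]) ^ n))).intervalIntegrable x 1)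
  rw [hint, eval_one_zero n hn]
  ring

theorem stmt11 (n : ℕ) (hn : 1 ≤ n) (P : Polynomial ℝ) (hdeg : P.degree = n)
    (hdef : ∀ x : ℝ, -((n : ℝ) + 1) * ∫ t in x..(1 : ℝ), legendreP n t = (x - 1) * P.eval x)
    (x : ℝ) :
    P.eval x = (x + 1) / (2 ^ n * (n.factorial : ℝ) * (n : ℝ)) *
      iteratedDeriv (n + 1) (fun y => (y ^ 2 - 1) ^ n) x := by
  have hf : (fun y : ℝ => (y ^ 2 - 1) ^ n) = fun y => ((X ^ 2 - 1 : ℝ[X]) ^ n).eval y := by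
    funext y; simp
  have hc : (2 ^ n * (n.factorial : ℝ)) ≠ 0 := by positivity
  have hn0 : (n : ℝ) ≠ 0 := Nat.cast_ne_zero.mpr (by omega)
  set R : ℝ[X] := C ((2 ^ n * (n.factorial : ℝ) * (n : ℝ))⁻¹) * (X + 1) *
    derivative^[n + 1] ((X ^ 2 - 1) ^ n) with hR
  have heq : ∀ y : ℝ, (y - 1) * P.eval y = (y - 1) * R.eval y := by
    intro y
    have h1 := hdef y
    have h2 : ∀ t : ℝ, legendreP n t
        = (1 / (2 ^ n * (n.factorial : ℝ))) * (derivative^[n] ((X ^ 2 - 1 : ℝ[X]) ^ n)).eval t := by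
      intro t
      rw [legendreP, hf, iteratedDeriv_polyeval]
    simp only [h2] at h1
    rw [intervalIntegral.integral_const_mul, integral_eval n hn] at h1
    have h3 := congrArg (Polynomial.eval y) (key_id n hn)
    simp only [eval_mul, eval_add, eval_sub, eval_pow, eval_X, eval_one, eval_natCast] at h3
    rw [hR]
    simp only [eval_mul, eval_add, eval_sub, eval_pow, eval_X, eval_one, eval_natCast, eval_C]
    rw [← h1]
    set a := (derivative^[n - 1] ((X ^ 2 - 1 : ℝ[X]) ^ n)).eval y with ha
    set D := (derivative^[n + 1] ((X ^ 2 - 1 : ℝ[X]) ^ n)).eval y with hD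
    have h4 : (y - 1) * ((2 ^ n * (n.factorial : ℝ) * (n : ℝ))⁻¹ * (y + 1) * D)
        = (2 ^ n * (n.factorial : ℝ) * (n : ℝ))⁻¹ * ((y ^ 2 - 1) * D) := by ring
    rw [h4, h3]
    field_simp
  have hP : P = R := by
    have hX : (X - 1 : ℝ[X]) ≠ 0 := by
      intro h
      have := congrArg (Polynomial.eval 2) h
      simp at this
      norm_num at this
    apply mul_left_cancel₀ hX
    apply Polynomial.funext
    intro y
    simp only [eval_mul, eval_sub, eval_X, eval_one]
    exact heq y
  rw [hP, hR]
  simp only [eval_mul, eval_add, eval_X, eval_one, eval_C]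
  rw [hf, iteratedDeriv_polyeval]
  field_simp
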